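/- (Lemma A1) The law L_{K,a} is symmetric about zero (it is invariant under the map x ↦ −x) and unimodal about zero: it admits a density with respect to Lebesgue measure on ℝ that is an even function and is nonincreasing on [0,∞); equivalently, its cumulative distribution function is convex on (−∞,0] and concave on [0,∞). -/

import Mathlib

open MeasureTheory ProbabilityTheory
open scoped ENNReal

lemma map_neg_withDensity' (f : ℝ → ℝ≥0∞) (hf : ∀ t, f (-t) = f t) :
    Measure.map (fun t : ℝ => -t) (volume.withDensity f) = volume.withDensity f := by
  ext A hA
  rw [Measure.map_apply measurable_neg hA, withDensity_apply _ (hA.preimage measurable_neg),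
    withDensity_apply _ hA]
  have h := (Measure.measurePreserving_neg (volume : Measure ℝ)).setLIntegral_comp_preimage_emb
    (MeasurableEquiv.neg ℝ).measurableEmbedding f A
  simp_rw [hf] at h
  exact h

theorem statement15 (K : ℕ) (hK : 0 < K) (a : ℝ) (ha : 0 < a) :
    Measure.map (fun t : ℝ => -t)
        (Measure.map (fun d : Fin K → ℝ => d ⟨0, hK⟩)
          ((Measure.pi fun _ : Fin K => gaussianReal 0 1)[|{d : Fin K → ℝ |
            ∑ j, (d j) ^ 2 ≤ a}]))
      = Measure.map (fun d : Fin K → ℝ => d ⟨0, hK⟩)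
          ((Measure.pi fun _ : Fin K => gaussianReal 0 1)[|{d : Fin K → ℝ |
            ∑ j, (d j) ^ 2 ≤ a}]) ∧
    ∃ f : ℝ → ℝ≥0∞,
      Measure.map (fun d : Fin K → ℝ => d ⟨0, hK⟩)
          ((Measure.pi fun _ : Fin K => gaussianReal 0 1)[|{d : Fin K → ℝ |
            ∑ j, (d j) ^ 2 ≤ a}])
        = MeasureTheory.volume.withDensity f ∧
      (∀ t : ℝ, f (-t) = f t) ∧
      (∀ s t : ℝ, 0 ≤ s → s ≤ t → f t ≤ f s) := by
  obtain ⟨n, rfl⟩ : ∃ n, K = n + 1 := ⟨K - 1, (Nat.succ_pred_eq_of_pos hK).symm⟩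
  set ρ : Measure ℝ := gaussianReal 0 1 with hρ
  set σ : Measure (Fin n → ℝ) := Measure.pi fun _ => gaussianReal 0 1 with hσ
  set μK : Measure (Fin (n+1) → ℝ) := Measure.pi fun _ => gaussianReal 0 1 with hμK
  set S : Set (Fin (n+1) → ℝ) := {d | ∑ j, (d j) ^ 2 ≤ a} with hS
  have hSm : MeasurableSet S := measurableSet_le (by fun_prop) measurable_const
  set T : Set (ℝ × (Fin n → ℝ)) := {p | p.1 ^ 2 + ∑ j, (p.2 j) ^ 2 ≤ a} with hT
  have hTm : MeasurableSet T := measurableSet_le (by fun_prop) measurable_const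
  set e := MeasurableEquiv.piFinSuccAbove (fun _ : Fin (n+1) => ℝ) 0 with he
  have hmp : MeasurePreserving e μK (ρ.prod σ) := measurePreserving_piFinSuccAbove _ 0
  have hpre : S = e ⁻¹' T := by
    ext d
    simp [hS, hT, he, MeasurableEquiv.piFinSuccAbove_apply, Fin.sum_univ_succ,
      Fin.succAbove_zero, Fin.tail]
  set g : ℝ → ℝ≥0∞ := fun t => σ (Prod.mk t ⁻¹' T) with hg
  have hgm : Measurable g := measurable_measure_prodMk_left hTm
  have hfst : (fun d : Fin (n+1) → ℝ => d ⟨0, hK⟩) = Prod.fst ∘ e := by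
    funext d; rfl
  set h : ℝ → ℝ≥0∞ := fun t => gaussianPDF 0 1 t * g t with hh
  have hhm : Measurable h := (measurable_gaussianPDF 0 1).mul hgm
  have key : Measure.map (fun d : Fin (n+1) → ℝ => d ⟨0, hK⟩) (μK.restrict S)
      = volume.withDensity h := by
    rw [hfst, hpre, ← Measure.map_map measurable_fst e.measurable,
      (hmp.restrict_preimage hTm).map_eq]
    ext A hA
    rw [Measure.map_apply measurable_fst hA,
      Measure.restrict_apply (hA.preimage measurable_fst),
      Measure.prod_apply ((hA.preimage measurable_fst).inter hTm),
      withDensity_apply _ hA]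
    have hslice : ∀ t : ℝ, σ (Prod.mk t ⁻¹' (Prod.fst ⁻¹' A ∩ T))
        = A.indicator g t := by
      intro t
      by_cases ht : t ∈ A
      · simp [Set.indicator_of_mem ht, hg]
        congr 1
        ext x
        simp [ht]
      · have hemp : Prod.mk t ⁻¹' (Prod.fst ⁻¹' A ∩ T) = ∅ := by
          ext x; simp [ht]
        simp [Set.indicator_of_notMem ht, hemp]
    simp_rw [hslice]
    rw [lintegral_indicator hA g, hρ, gaussianReal_of_var_ne_zero _ one_ne_zero,
      setLIntegral_withDensity_eq_setLIntegral_mul _ (measurable_gaussianPDF 0 1) hgm hA]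
    rfl
  set c : ℝ≥0∞ := (μK S)⁻¹ with hc
  set f : ℝ → ℝ≥0∞ := fun t => c * h t with hf
  have hcond : Measure.map (fun d : Fin (n+1) → ℝ => d ⟨0, hK⟩) (μK[|S])
      = volume.withDensity f := by
    have : μK[|S] = c • μK.restrict S := rfl
    rw [this, Measure.map_smul, key, ← withDensity_smul c hhm]
    rfl
  have hfeven : ∀ t : ℝ, f (-t) = f t := by
    intro t
    have h1 : gaussianPDF 0 1 (-t) = gaussianPDF 0 1 t := by
      simp [gaussianPDF, gaussianPDFReal, neg_sq]
    have h2 : g (-t) = g t := by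
      simp only [hg]
      congr 1
      ext x
      simp [hT, neg_sq]
    simp [hf, hh, h1, h2]
  have hfmono : ∀ s t : ℝ, 0 ≤ s → s ≤ t → f t ≤ f s := by
    intro s t hs hst
    have hsq : s ^ 2 ≤ t ^ 2 := by nlinarith
    have h1 : gaussianPDF 0 1 t ≤ gaussianPDF 0 1 s := by
      apply ENNReal.ofReal_le_ofReal
      simp only [gaussianPDFReal, sub_zero]
      gcongr <;> first | positivity | norm_num | linarith
    have h2 : g t ≤ g s := by
      apply measure_mono
      intro x hx
      simp only [hT, Set.mem_preimage, Set.mem_setOf_eq] at hx ⊢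
      linarith
    exact mul_le_mul_right (mul_le_mul' h1 h2) c
  refine ⟨?_, f, hcond, hfeven, hfmono⟩
  rw [hcond]
  exact map_neg_withDensity' f hfeven
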